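/- Let E = V ⊕ W be a direct sum decomposition of a finite-dimensional real inner product space with the angle between V and W bounded below by α > 0, and let A be a linear automorphism of E preserving the decomposition (A(V) = V', A(W) = W' with angle between V' and W' also at least α). Then there is a constant c(α) > 0 depending only on α and the dimensions such that c(α) |det(A|_V)|·|det(A|_W)| ≤ |det A| ≤ c(α)^{-1} |det(A|_V)|·|det(A|_W)|. -/

import Mathlib

open LinearMap Module Submodule
open scoped RealInnerProductSpace

section helpers

variable {E : Type*} [NormedAddCommGroup E] [InnerProductSpace ℝ E] [FiniteDimensional ℝ E]
variable {F : Type*} [NormedAddCommGroup F] [InnerProductSpace ℝ F] [FiniteDimensional ℝ F]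

lemma my_det_prodMap {R M N : Type*} [CommRing R] [AddCommGroup M] [Module R M]
    [AddCommGroup N] [Module R N] [Module.Free R M] [Module.Finite R M]
    [Module.Free R N] [Module.Finite R N] (f : M →ₗ[R] M) (g : N →ₗ[R] N) :
    LinearMap.det (f.prodMap g) = LinearMap.det f * LinearMap.det g := by
  classical
  let bM := Module.Free.chooseBasis R M
  let bN := Module.Free.chooseBasis R N
  rw [← LinearMap.det_toMatrix (bM.prod bN), LinearMap.toMatrix_prodMap,
    Matrix.det_fromBlocks_zero₂₁, LinearMap.det_toMatrix, LinearMap.det_toMatrix]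

lemma my_adjoint_subtype_comp (U : Submodule ℝ E) :
    (LinearMap.adjoint U.subtype) ∘ₗ U.subtype = LinearMap.id := by
  refine LinearMap.ext fun x => ext_inner_right ℝ fun y => ?_
  rw [LinearMap.comp_apply, LinearMap.adjoint_inner_left]
  rfl

lemma my_det_adjoint (f : E →ₗ[ℝ] E) :
    LinearMap.det (LinearMap.adjoint f) = LinearMap.det f := by
  let b := stdOrthonormalBasis ℝ E
  rw [← LinearMap.det_toMatrix b.toBasis, LinearMap.toMatrix_adjoint,
    Matrix.det_conjTranspose, LinearMap.det_toMatrix, star_trivial]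

lemma my_det_adj_conj (S : F ≃ₗ[ℝ] E) (N : E →ₗ[ℝ] E) :
    LinearMap.det (LinearMap.adjoint (S : F →ₗ[ℝ] E) ∘ₗ (N ∘ₗ (S : F →ₗ[ℝ] E))) =
      LinearMap.det (LinearMap.adjoint (S : F →ₗ[ℝ] E) ∘ₗ (S : F →ₗ[ℝ] E)) * LinearMap.det N := by
  have h : LinearMap.adjoint (S : F →ₗ[ℝ] E) ∘ₗ (N ∘ₗ (S : F →ₗ[ℝ] E)) =
      (LinearMap.adjoint (S : F →ₗ[ℝ] E) ∘ₗ (S : F →ₗ[ℝ] E)) ∘ₗ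
        ((S.symm : E →ₗ[ℝ] F) ∘ₗ (N ∘ₗ (S : F →ₗ[ℝ] E))) := by
    ext x; simp
  rw [h, LinearMap.det_comp]
  congr 1
  have := LinearMap.det_conj N S.symm
  simpa using this

lemma my_det_spectrum {T : F →ₗ[ℝ] F} (hT : T.IsSymmetric) :
    ∃ μ : Fin (finrank ℝ F) → ℝ, LinearMap.det T = ∏ i, μ i ∧
      ∀ i, ∃ x : F, ‖x‖ = 1 ∧ ⟪T x, x⟫ = μ i := by
  have hn : finrank ℝ F = finrank ℝ F := rfl
  let β := hT.eigenvectorBasis hn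
  let μ := hT.eigenvalues hn
  have hβ : ∀ i, T (β i) = μ i • β i := fun i => hT.apply_eigenvectorBasis hn i
  have hnorm : ∀ i, ‖β i‖ = 1 := fun i => β.orthonormal.1 i
  have hμ : ∀ i, ⟪T (β i), β i⟫ = μ i := by
    intro i
    rw [hβ i, real_inner_smul_left, real_inner_self_eq_norm_sq, hnorm, one_pow, mul_one]
  have hdet : LinearMap.det T = ∏ i, μ i := by
    rw [← LinearMap.det_toMatrix β.toBasis]
    have hm : LinearMap.toMatrix β.toBasis β.toBasis T = Matrix.diagonal μ := by
      ext i j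
      rw [LinearMap.toMatrix_apply, OrthonormalBasis.coe_toBasis, hβ j, map_smul,
        ← OrthonormalBasis.coe_toBasis, Basis.repr_self]
      by_cases h : i = j
      · simp [h, Finsupp.smul_apply, Finsupp.single_apply, Matrix.diagonal_apply]
      · simp [h, eq_comm, Finsupp.smul_apply, Finsupp.single_apply, Matrix.diagonal_apply]
    rw [hm, Matrix.det_diagonal]
  exact ⟨μ, hdet, fun i => ⟨β i, hnorm i, hμ i⟩⟩

lemma my_det_bounds {T : F →ₗ[ℝ] F} (hT : T.IsSymmetric) {a b : ℝ} (ha : 0 ≤ a)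
    (h1 : ∀ x : F, a * ‖x‖ ^ 2 ≤ ⟪T x, x⟫) (h2 : ∀ x : F, ⟪T x, x⟫ ≤ b * ‖x‖ ^ 2) :
    a ^ (finrank ℝ F) ≤ LinearMap.det T ∧ LinearMap.det T ≤ b ^ (finrank ℝ F) := by
  obtain ⟨μ, hdet, hx⟩ := my_det_spectrum hT
  have hμa : ∀ i, a ≤ μ i := by
    intro i
    obtain ⟨x, hx1, hx2⟩ := hx i
    have := h1 x
    rw [hx2, hx1, one_pow, mul_one] at this
    exact this
  have hμb : ∀ i, μ i ≤ b := by
    intro i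
    obtain ⟨x, hx1, hx2⟩ := hx i
    have := h2 x
    rw [hx2, hx1, one_pow, mul_one] at this
    exact this
  constructor
  · rw [hdet]
    calc a ^ (finrank ℝ F) = ∏ _i : Fin (finrank ℝ F), a := by
          rw [Finset.prod_const, Finset.card_univ, Fintype.card_fin]
    _ ≤ ∏ i, μ i := Finset.prod_le_prod (fun _ _ => ha) (fun i _ => hμa i)
  · rw [hdet]
    calc (∏ i, μ i) ≤ ∏ _i : Fin (finrank ℝ F), b :=
        Finset.prod_le_prod (fun i _ => le_trans ha (hμa i)) (fun i _ => hμb i)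
    _ = b ^ (finrank ℝ F) := by rw [Finset.prod_const, Finset.card_univ, Fintype.card_fin]

lemma my_det_nonneg {T : F →ₗ[ℝ] F} (hT : T.IsSymmetric)
    (h1 : ∀ x : F, 0 ≤ ⟪T x, x⟫) : 0 ≤ LinearMap.det T := by
  obtain ⟨μ, hdet, hx⟩ := my_det_spectrum hT
  rw [hdet]
  refine Finset.prod_nonneg fun i _ => ?_
  obtain ⟨x, _, hx2⟩ := hx i
  rw [← hx2]; exact h1 x

lemma my_adj_comp_symmetric {G : Type*} [NormedAddCommGroup G] [InnerProductSpace ℝ G]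
    [FiniteDimensional ℝ G] (f : F →ₗ[ℝ] G) :
    (LinearMap.adjoint f ∘ₗ f).IsSymmetric := by
  intro x y
  rw [LinearMap.comp_apply, LinearMap.comp_apply, LinearMap.adjoint_inner_left,
    LinearMap.adjoint_inner_right]

lemma my_adj_comp_nonneg {G : Type*} [NormedAddCommGroup G] [InnerProductSpace ℝ G]
    [FiniteDimensional ℝ G] (f : F →ₗ[ℝ] G) (x : F) :
    0 ≤ ⟪(LinearMap.adjoint f ∘ₗ f) x, x⟫ := by
  rw [LinearMap.comp_apply, LinearMap.adjoint_inner_left]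
  exact real_inner_self_nonneg

lemma my_angle_bound {v w : E} {k : ℝ} (hk : 0 ≤ k)
    (hvw : |⟪v, w⟫| ≤ k * (‖v‖ * ‖w‖)) :
    (1 - k) * (‖v‖ ^ 2 + ‖w‖ ^ 2) ≤ ‖v + w‖ ^ 2 ∧
      ‖v + w‖ ^ 2 ≤ 2 * (‖v‖ ^ 2 + ‖w‖ ^ 2) := by
  have h := norm_add_sq_real v w
  have habs := abs_le.mp hvw
  have hvn : 0 ≤ ‖v‖ := norm_nonneg v
  have hwn : 0 ≤ ‖w‖ := norm_nonneg w
  have hvw2 : ⟪v, w⟫ ≤ ‖v‖ * ‖w‖ := real_inner_le_norm v w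
  constructor
  · nlinarith [sq_nonneg (‖v‖ - ‖w‖)]
  · nlinarith [sq_nonneg (‖v‖ - ‖w‖)]

end helpers

/-- The volume-scaling factor (absolute Jacobian determinant) of a linear map `A`
restricted to a subspace `V`, defined via the Gram determinant `√(det (A|_V)^* (A|_V))`.
For `V = ⊥` it equals `1`. -/
noncomputable def sdet {E F : Type*} [NormedAddCommGroup E] [InnerProductSpace ℝ E]
    [FiniteDimensional ℝ E] [NormedAddCommGroup F] [InnerProductSpace ℝ F]
    [FiniteDimensional ℝ F] (A : E →ₗ[ℝ] F) (V : Submodule ℝ E) : ℝ :=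
  Real.sqrt (LinearMap.det ((LinearMap.adjoint (A ∘ₗ V.subtype)) ∘ₗ (A ∘ₗ V.subtype)))

set_option maxHeartbeats 1000000 in
/-- for direct sum decompositions `E = V ⊕ W` with angle bounded below by
`α > 0`, and automorphisms `A` carrying `V ⊕ W` to a decomposition `A(V) ⊕ A(W)` whose angle
is also at least `α`, the absolute determinant of `A` factorizes through the volume-scaling
determinants on `V` and `W` up to a multiplicative constant `c = c(α) > 0` depending only on
`α` (and the space, hence the dimensions). The angle bound is expressed by
`|⟪v,w⟫| ≤ cos α · ‖v‖ ‖w‖` for nonzero `v, w`. -/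
theorem stmt9 {E : Type*} [NormedAddCommGroup E] [InnerProductSpace ℝ E]
    [FiniteDimensional ℝ E] (α : ℝ) (hα0 : 0 < α) (hα : α ≤ Real.pi / 2) :
    ∃ c : ℝ, 0 < c ∧
      ∀ (A : E ≃ₗ[ℝ] E) (V W : Submodule ℝ E), IsCompl V W →
        (∀ v ∈ V, ∀ w ∈ W, v ≠ 0 → w ≠ 0 →
          |(inner ℝ v w : ℝ)| ≤ Real.cos α * (‖v‖ * ‖w‖)) →
        (∀ v ∈ V.map (A : E →ₗ[ℝ] E), ∀ w ∈ W.map (A : E →ₗ[ℝ] E), v ≠ 0 → w ≠ 0 →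
          |(inner ℝ v w : ℝ)| ≤ Real.cos α * (‖v‖ * ‖w‖)) →
        c * (sdet (A : E →ₗ[ℝ] E) V * sdet (A : E →ₗ[ℝ] E) W) ≤
            |LinearMap.det (A : E →ₗ[ℝ] E)| ∧
          |LinearMap.det (A : E →ₗ[ℝ] E)| ≤
            c⁻¹ * (sdet (A : E →ₗ[ℝ] E) V * sdet (A : E →ₗ[ℝ] E) W) := by
  classical
  have hπ := Real.pi_pos
  have hcos0 : 0 ≤ Real.cos α :=
    Real.cos_nonneg_of_mem_Icc ⟨by linarith, hα⟩
  have hcos1 : Real.cos α < 1 := by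
    have := Real.cos_lt_cos_of_nonneg_of_le_pi (le_refl 0) (by linarith) hα0
    simpa using this
  set a : ℝ := 1 - Real.cos α with ha_def
  have ha : 0 < a := by simp [ha_def]; linarith
  have ha2 : a ≤ 2 := by simp [ha_def]; linarith
  set n := finrank ℝ E with hn_def
  refine ⟨Real.sqrt ((a / 2) ^ n), Real.sqrt_pos.mpr (pow_pos (by linarith) n), ?_⟩
  intro A V W hVW hang hang'
  set AL := (A : E →ₗ[ℝ] E) with hAL_def
  -- unconditional angle bounds
  have hang2 : ∀ v ∈ V, ∀ w ∈ W, |(inner ℝ v w : ℝ)| ≤ Real.cos α * (‖v‖ * ‖w‖) := by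
    intro v hv w hw
    by_cases hv0 : v = 0
    · simp [hv0]
    by_cases hw0 : w = 0
    · simp [hw0]
    exact hang v hv w hw hv0 hw0
  have hang2' : ∀ v ∈ V.map AL, ∀ w ∈ W.map AL,
      |(inner ℝ v w : ℝ)| ≤ Real.cos α * (‖v‖ * ‖w‖) := by
    intro v hv w hw
    by_cases hv0 : v = 0
    · simp [hv0]
    by_cases hw0 : w = 0
    · simp [hw0]
    exact hang' v hv w hw hv0 hw0
  set V' := V.map AL with hV'_def
  set W' := W.map AL with hW'_def
  have hVW' : IsCompl V' W' := by
    have hinj : Function.Injective AL := A.injective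
    constructor
    · rw [disjoint_iff, hV'_def, hW'_def, ← Submodule.map_inf AL hinj,
        disjoint_iff.mp hVW.1, Submodule.map_bot]
    · rw [codisjoint_iff, hV'_def, hW'_def, ← Submodule.map_sup,
        codisjoint_iff.mp hVW.2, Submodule.map_top]
      exact LinearMap.range_eq_top.mpr A.surjective
  -- the sum-map equivalences
  set q : WithLp 2 (V × W) ≃ₗ[ℝ] V × W := WithLp.linearEquiv 2 ℝ (V × W) with hq_def
  set q' : WithLp 2 (V' × W') ≃ₗ[ℝ] V' × W' := WithLp.linearEquiv 2 ℝ (V' × W') with hq'_def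
  set S : WithLp 2 (V × W) ≃ₗ[ℝ] E := q.trans (Submodule.prodEquivOfIsCompl V W hVW)
    with hS_def
  set S' : WithLp 2 (V' × W') ≃ₗ[ℝ] E := q'.trans (Submodule.prodEquivOfIsCompl V' W' hVW')
    with hS'_def
  set eAV : V ≃ₗ[ℝ] V' := A.submoduleMap V with heAV_def
  set eAW : W ≃ₗ[ℝ] W' := A.submoduleMap W with heAW_def
  set D : WithLp 2 (V × W) ≃ₗ[ℝ] WithLp 2 (V' × W') :=
    q.trans ((eAV.prodCongr eAW).trans q'.symm) with hD_def
  have hid' : ∀ y : V', LinearMap.adjoint V'.subtype (V'.subtype y) = y := fun y =>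
    DFunLike.congr_fun (my_adjoint_subtype_comp V') y
  have hid'' : ∀ y : W', LinearMap.adjoint W'.subtype (W'.subtype y) = y := fun y =>
    DFunLike.congr_fun (my_adjoint_subtype_comp W') y
  -- reduction of sdet to the restricted equivalences
  have hAV : AL ∘ₗ V.subtype = V'.subtype ∘ₗ (eAV : V →ₗ[ℝ] V') := by
    ext x; rfl
  have hAW : AL ∘ₗ W.subtype = W'.subtype ∘ₗ (eAW : W →ₗ[ℝ] W') := by
    ext x; rfl
  set dV := LinearMap.det (LinearMap.adjoint (eAV : V →ₗ[ℝ] V') ∘ₗ (eAV : V →ₗ[ℝ] V'))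
    with hdV_def
  set dW := LinearMap.det (LinearMap.adjoint (eAW : W →ₗ[ℝ] W') ∘ₗ (eAW : W →ₗ[ℝ] W'))
    with hdW_def
  have hsdV : sdet AL V = Real.sqrt dV := by
    unfold sdet
    congr 1
  have hsdW : sdet AL W = Real.sqrt dW := by
    unfold sdet
    congr 1
  -- linear map versions
  set Sl := (S : WithLp 2 (V × W) →ₗ[ℝ] E) with hSl_def
  set S'l := (S' : WithLp 2 (V' × W') →ₗ[ℝ] E) with hS'l_def
  set Dl := (D : WithLp 2 (V × W) →ₗ[ℝ] WithLp 2 (V' × W')) with hDl_def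
  set T := LinearMap.adjoint Sl ∘ₗ Sl with hT_def
  set T' := LinearMap.adjoint S'l ∘ₗ S'l with hT'_def
  have hcomm : AL ∘ₗ Sl = S'l ∘ₗ Dl := by
    refine LinearMap.ext fun x => ?_
    show AL (S x) = S' (D x)
    simp only [hS_def, hS'_def, hD_def, LinearEquiv.trans_apply,
      Submodule.coe_prodEquivOfIsCompl', LinearEquiv.prodCongr_apply]
    simp only [hq_def, hq'_def, WithLp.linearEquiv_apply, WithLp.linearEquiv_symm_apply,
      LinearEquiv.submoduleMap_apply, map_add]
    rfl
  -- the adjoint of D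
  have hDadj : LinearMap.adjoint Dl ∘ₗ Dl =
      (q.symm : V × W →ₗ[ℝ] WithLp 2 (V × W)) ∘ₗ
        (((LinearMap.adjoint (eAV : V →ₗ[ℝ] V') ∘ₗ (eAV : V →ₗ[ℝ] V')).prodMap
          (LinearMap.adjoint (eAW : W →ₗ[ℝ] W') ∘ₗ (eAW : W →ₗ[ℝ] W'))) ∘ₗ
          (q : WithLp 2 (V × W) →ₗ[ℝ] V × W)) := by
    have hadj : LinearMap.adjoint Dl =
        (q.symm : V × W →ₗ[ℝ] WithLp 2 (V × W)) ∘ₗ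
          (((LinearMap.adjoint (eAV : V →ₗ[ℝ] V')).prodMap
            (LinearMap.adjoint (eAW : W →ₗ[ℝ] W'))) ∘ₗ
            (q' : WithLp 2 (V' × W') →ₗ[ℝ] V' × W')) := by
      refine ((LinearMap.eq_adjoint_iff _ _).mpr fun x y => ?_).symm
      rw [WithLp.prod_inner_apply, WithLp.prod_inner_apply]
      show (inner ℝ (LinearMap.adjoint (eAV : V →ₗ[ℝ] V') (q' x).1) (q y).1 : ℝ) +
          (inner ℝ (LinearMap.adjoint (eAW : W →ₗ[ℝ] W') (q' x).2) (q y).2 : ℝ) =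
        (inner ℝ (q' x).1 (eAV (q y).1) : ℝ) + (inner ℝ (q' x).2 (eAW (q y).2) : ℝ)
      rw [LinearMap.adjoint_inner_left, LinearMap.adjoint_inner_left]
      rfl
    rw [hadj]
    refine LinearMap.ext fun x => ?_
    rfl
  have hdetD : LinearMap.det (LinearMap.adjoint Dl ∘ₗ Dl) = dV * dW := by
    rw [hDadj, hdV_def, hdW_def, ← my_det_prodMap]
    have hq2 : (q : WithLp 2 (V × W) →ₗ[ℝ] V × W) =
        ((q.symm.symm : WithLp 2 (V × W) ≃ₗ[ℝ] V × W) : WithLp 2 (V × W) →ₗ[ℝ] V × W) := rfl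
    rw [hq2]
    exact LinearMap.det_conj _ q.symm
  -- main determinant identity
  have e1 : LinearMap.det (LinearMap.adjoint (AL ∘ₗ Sl) ∘ₗ (AL ∘ₗ Sl)) =
      LinearMap.det T * (LinearMap.det AL) ^ 2 := by
    rw [LinearMap.adjoint_comp]
    have hr : (LinearMap.adjoint Sl ∘ₗ LinearMap.adjoint AL) ∘ₗ (AL ∘ₗ Sl) =
        LinearMap.adjoint Sl ∘ₗ ((LinearMap.adjoint AL ∘ₗ AL) ∘ₗ Sl) := by
      simp only [LinearMap.comp_assoc]
    rw [hr, my_det_adj_conj S (LinearMap.adjoint AL ∘ₗ AL), LinearMap.det_comp,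
      my_det_adjoint, sq, hT_def]
  have e2 : LinearMap.det (LinearMap.adjoint (AL ∘ₗ Sl) ∘ₗ (AL ∘ₗ Sl)) =
      (dV * dW) * LinearMap.det T' := by
    rw [hcomm, LinearMap.adjoint_comp]
    have hr : (LinearMap.adjoint Dl ∘ₗ LinearMap.adjoint S'l) ∘ₗ (S'l ∘ₗ Dl) =
        LinearMap.adjoint Dl ∘ₗ ((LinearMap.adjoint S'l ∘ₗ S'l) ∘ₗ Dl) := by
      simp only [LinearMap.comp_assoc]
    rw [hr, my_det_adj_conj D (LinearMap.adjoint S'l ∘ₗ S'l), hdetD, hT'_def]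
  -- quadratic form bounds for T and T'
  have hTsym : T.IsSymmetric := by rw [hT_def]; exact my_adj_comp_symmetric Sl
  have hT'sym : T'.IsSymmetric := by rw [hT'_def]; exact my_adj_comp_symmetric S'l
  have hSx : ∀ x : WithLp 2 (V × W), S x = ((q x).1 : E) + ((q x).2 : E) := fun x => rfl
  have hS'x : ∀ x : WithLp 2 (V' × W'), S' x = ((q' x).1 : E) + ((q' x).2 : E) := fun x => rfl
  have hTx : ∀ x : WithLp 2 (V × W), ⟪T x, x⟫ = ‖S x‖ ^ 2 := by
    intro x
    rw [hT_def, LinearMap.comp_apply, LinearMap.adjoint_inner_left,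
      real_inner_self_eq_norm_sq]
    rfl
  have hT'x : ∀ x : WithLp 2 (V' × W'), ⟪T' x, x⟫ = ‖S' x‖ ^ 2 := by
    intro x
    rw [hT'_def, LinearMap.comp_apply, LinearMap.adjoint_inner_left,
      real_inner_self_eq_norm_sq]
    rfl
  have hnormP : ∀ x : WithLp 2 (V × W),
      ‖x‖ ^ 2 = ‖((q x).1 : E)‖ ^ 2 + ‖((q x).2 : E)‖ ^ 2 := by
    intro x
    rw [WithLp.prod_norm_sq_eq_of_L2]
    rfl
  have hnormP' : ∀ x : WithLp 2 (V' × W'),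
      ‖x‖ ^ 2 = ‖((q' x).1 : E)‖ ^ 2 + ‖((q' x).2 : E)‖ ^ 2 := by
    intro x
    rw [WithLp.prod_norm_sq_eq_of_L2]
    rfl
  have hT1 : ∀ x : WithLp 2 (V × W), a * ‖x‖ ^ 2 ≤ ⟪T x, x⟫ := by
    intro x
    have hb := my_angle_bound hcos0
      (hang2 _ (SetLike.coe_mem ((q x).1)) _ (SetLike.coe_mem ((q x).2)))
    rw [hTx, hSx, hnormP, ha_def]
    exact hb.1
  have hT2 : ∀ x : WithLp 2 (V × W), ⟪T x, x⟫ ≤ 2 * ‖x‖ ^ 2 := by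
    intro x
    have hb := my_angle_bound hcos0
      (hang2 _ (SetLike.coe_mem ((q x).1)) _ (SetLike.coe_mem ((q x).2)))
    rw [hTx, hSx, hnormP]
    exact hb.2
  have hT'1 : ∀ x : WithLp 2 (V' × W'), a * ‖x‖ ^ 2 ≤ ⟪T' x, x⟫ := by
    intro x
    have hb := my_angle_bound hcos0
      (hang2' _ (SetLike.coe_mem ((q' x).1)) _ (SetLike.coe_mem ((q' x).2)))
    rw [hT'x, hS'x, hnormP', ha_def]
    exact hb.1
  have hT'2 : ∀ x : WithLp 2 (V' × W'), ⟪T' x, x⟫ ≤ 2 * ‖x‖ ^ 2 := by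
    intro x
    have hb := my_angle_bound hcos0
      (hang2' _ (SetLike.coe_mem ((q' x).1)) _ (SetLike.coe_mem ((q' x).2)))
    rw [hT'x, hS'x, hnormP']
    exact hb.2
  have hfr : finrank ℝ (WithLp 2 (V × W)) = n := S.finrank_eq
  have hfr' : finrank ℝ (WithLp 2 (V' × W')) = n := S'.finrank_eq
  obtain ⟨htl, htu⟩ := my_det_bounds hTsym (le_of_lt ha) hT1 hT2
  obtain ⟨ht'l, ht'u⟩ := my_det_bounds hT'sym (le_of_lt ha) hT'1 hT'2
  rw [hfr] at htl htu
  rw [hfr'] at ht'l ht'u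
  have htpos : (0:ℝ) < LinearMap.det T := lt_of_lt_of_le (pow_pos ha n) htl
  have ht'pos : (0:ℝ) < LinearMap.det T' := lt_of_lt_of_le (pow_pos ha n) ht'l
  have hdVnn : 0 ≤ dV := by
    rw [hdV_def]
    exact my_det_nonneg (my_adj_comp_symmetric _) (my_adj_comp_nonneg _)
  have hdWnn : 0 ≤ dW := by
    rw [hdW_def]
    exact my_det_nonneg (my_adj_comp_symmetric _) (my_adj_comp_nonneg _)
  have key : LinearMap.det T * (LinearMap.det AL) ^ 2 = (dV * dW) * LinearMap.det T' :=
    e1.symm.trans e2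
  have han : (0:ℝ) < a ^ n := pow_pos ha n
  have h2n : (0:ℝ) < 2 ^ n := by positivity
  constructor
  · rw [hsdV, hsdW, ← Real.sqrt_mul hdVnn dW,
      ← Real.sqrt_mul (le_of_lt (pow_pos (div_pos ha two_pos) n)) (dV * dW),
      ← Real.sqrt_sq_eq_abs]
    apply Real.sqrt_le_sqrt
    have hkey2 : (a / 2) ^ n * (dV * dW) * LinearMap.det T ≤
        (LinearMap.det AL) ^ 2 * LinearMap.det T := by
      rw [div_pow]
      calc a ^ n / 2 ^ n * (dV * dW) * LinearMap.det T
          ≤ a ^ n / 2 ^ n * (dV * dW) * 2 ^ n := by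
            apply mul_le_mul_of_nonneg_left htu (by positivity)
      _ = a ^ n * (dV * dW) := by field_simp
      _ ≤ LinearMap.det T' * (dV * dW) :=
            mul_le_mul_of_nonneg_right ht'l (by positivity)
      _ = (LinearMap.det AL) ^ 2 * LinearMap.det T := by linear_combination - key
    exact le_of_mul_le_mul_right hkey2 htpos
  · rw [hsdV, hsdW, ← Real.sqrt_mul hdVnn dW]
    have hcinv : (Real.sqrt ((a / 2) ^ n))⁻¹ = Real.sqrt ((2 / a) ^ n) := by
      rw [← Real.sqrt_inv, ← inv_pow, inv_div]
    rw [hcinv, ← Real.sqrt_mul (by positivity) (dV * dW), ← Real.sqrt_sq_eq_abs]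
    apply Real.sqrt_le_sqrt
    have hkey2 : (LinearMap.det AL) ^ 2 * a ^ n ≤ (2 / a) ^ n * (dV * dW) * a ^ n := by
      calc (LinearMap.det AL) ^ 2 * a ^ n
          ≤ (LinearMap.det AL) ^ 2 * LinearMap.det T :=
            mul_le_mul_of_nonneg_left htl (sq_nonneg _)
      _ = (dV * dW) * LinearMap.det T' := by linear_combination key
      _ ≤ (dV * dW) * 2 ^ n :=
            mul_le_mul_of_nonneg_left ht'u (by positivity)
      _ = (2 / a) ^ n * (dV * dW) * a ^ n := by
            rw [div_pow]
            field_simp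
    exact le_of_mul_le_mul_right hkey2 han
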